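/- For positive integers p and q, the polynomial g_{p,q}(x) = ∑_{i=0}^{min(p,q)} 4^i C(p,i) C(q,i) x^i is real-rooted and g_{p,q} interlaces g_{p,q+1} (their roots alternate). -/

import Mathlib

open Polynomial Finset

/-- The γ-polynomial `g_{p,q}` of the h*-polynomial of `B_{K_{p,q}}`. -/
noncomputable def gKpq (p q : ℕ) : Polynomial ℝ :=
  ∑ i ∈ Finset.range (min p q + 1), C ((4 : ℝ) ^ i * p.choose i * q.choose i) * X ^ i

def RootsRep (f : Polynomial ℝ) (l : List ℝ) : Prop :=
  f.roots = ↑l ∧ l.Chain' (· > ·) ∧ l.length = f.natDegree ∧ ∀ x ∈ l, x < 0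

def Interlace (a b : List ℝ) : Prop :=
  (∀ i (h1 : i < b.length) (h2 : i < a.length), b.get ⟨i, h1⟩ < a.get ⟨i, h2⟩) ∧
  (∀ i (h1 : i + 1 < a.length) (h2 : i < b.length), a.get ⟨i+1, h1⟩ < b.get ⟨i, h2⟩)


lemma coeff_gKpq (p q i : ℕ) :
    (gKpq p q).coeff i = 4 ^ i * p.choose i * q.choose i := by
  unfold gKpq
  rw [finset_sum_coeff]
  simp only [coeff_C_mul, coeff_X_pow, mul_ite, mul_one, mul_zero]
  rw [Finset.sum_ite_eq (Finset.range (min p q + 1)) i]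
  by_cases h : i ∈ Finset.range (min p q + 1)
  · simp [h]
  · simp only [h, if_false]
    rw [Finset.mem_range, not_lt] at h
    have : p < i ∨ q < i := by omega
    rcases this with h' | h'
    · simp [Nat.choose_eq_zero_of_lt h']
    · simp [Nat.choose_eq_zero_of_lt h']

lemma natDegree_gKpq (p q : ℕ) : (gKpq p q).natDegree = min p q := by
  apply le_antisymm
  · rw [natDegree_le_iff_coeff_eq_zero]
    intro m hm
    rw [coeff_gKpq]
    have : p < m ∨ q < m := by omega
    rcases this with h' | h'
    · simp [Nat.choose_eq_zero_of_lt h']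
    · simp [Nat.choose_eq_zero_of_lt h']
  · apply le_natDegree_of_ne_zero
    rw [coeff_gKpq]
    have h1 : (0:ℝ) < p.choose (min p q) := by
      exact_mod_cast Nat.cast_pos.mpr (Nat.choose_pos (min_le_left p q))
    have h2 : (0:ℝ) < q.choose (min p q) := by
      exact_mod_cast Nat.cast_pos.mpr (Nat.choose_pos (min_le_right p q))
    positivity

lemma leadingCoeff_gKpq_pos (p q : ℕ) : 0 < (gKpq p q).leadingCoeff := by
  rw [leadingCoeff, natDegree_gKpq, coeff_gKpq]
  have h1 : (0:ℝ) < p.choose (min p q) := by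
    exact_mod_cast Nat.cast_pos.mpr (Nat.choose_pos (min_le_left p q))
  have h2 : (0:ℝ) < q.choose (min p q) := by
    exact_mod_cast Nat.cast_pos.mpr (Nat.choose_pos (min_le_right p q))
  positivity

lemma gKpq_ne_zero (p q : ℕ) : gKpq p q ≠ 0 := by
  intro h
  have := leadingCoeff_gKpq_pos p q
  rw [h, leadingCoeff_zero] at this
  exact lt_irrefl _ this

lemma eval_zero_gKpq (p q : ℕ) : (gKpq p q).eval 0 = 1 := by
  have h := coeff_gKpq p q 0
  simp only [pow_zero, Nat.choose_zero_right, Nat.cast_one, one_mul, mul_one] at h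
  rw [← coeff_zero_eq_eval_zero, h]

lemma eval_zero_gKpq' (p q : ℕ) : (gKpq p q).coeff 0 = 1 := by
  simp [coeff_gKpq]



lemma choose_cast_one (n k : ℕ) :
    ((n:ℝ)+1) * n.choose k = ((k:ℝ)+1) * (n+1).choose (k+1) := by
  have := Nat.add_one_mul_choose_eq n k
  have h := congrArg (Nat.cast (R := ℝ)) this
  push_cast at h
  linarith

lemma choose_cast_two (n k : ℕ) :
    ((k:ℝ)+1) * n.choose (k+1) = ((n:ℝ)-k) * n.choose k := by
  by_cases h : k ≤ n
  · have := Nat.choose_succ_right_eq n k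
    have h2 := congrArg (Nat.cast (R := ℝ)) this
    push_cast [Nat.cast_sub h] at h2
    linarith
  · push_neg at h
    rw [Nat.choose_eq_zero_of_lt h, Nat.choose_eq_zero_of_lt (by omega)]
    by_cases h' : k = n
    · omega
    · simp

lemma choose_cast_three (n k : ℕ) :
    ((n:ℝ)+1) * n.choose (k+1) = ((n:ℝ)-k) * (n+1).choose (k+1) := by
  have h1 := choose_cast_one n (k+1)
  have h2 := choose_cast_two (n+1) (k+1)
  push_cast at h1 h2 ⊢
  linarith [h1, h2]

lemma choose_id (p j k : ℕ) :
    ((j:ℝ)+2) * p.choose (k+1) * (j+2).choose (k+1)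
      = (2*(j:ℝ)+3) * p.choose (k+1) * (j+1).choose (k+1)
        + ((p:ℝ)-(j:ℝ)-1) * p.choose k * (j+1).choose k
        + ((j:ℝ)+1) * p.choose k * j.choose k
        - ((j:ℝ)+1) * p.choose (k+1) * j.choose (k+1) := by
  set a : ℝ := (p.choose (k+1) : ℝ) with ha
  set b : ℝ := (p.choose k : ℝ) with hb
  set u : ℝ := ((j+1).choose (k+1) : ℝ) with hu
  set v : ℝ := ((j+1).choose k : ℝ) with hv
  set w : ℝ := (j.choose k : ℝ) with hw
  set z : ℝ := (j.choose (k+1) : ℝ) with hz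
  set s : ℝ := ((j+2).choose (k+1) : ℝ) with hs
  set J : ℝ := (j:ℝ)+1 with hJ
  set K : ℝ := (k:ℝ)+1 with hK
  have h1 : s = v + u := by
    rw [hs, hv, hu]
    exact_mod_cast congrArg (Nat.cast (R := ℝ)) (Nat.choose_succ_succ (j+1) k)
  have h2 : J * z = ((j:ℝ)-k) * u := choose_cast_three j k
  have h3 : J * w = K * u := choose_cast_one j k
  have h4 : K * a = ((p:ℝ)-k) * b := choose_cast_two p k
  have h5 : K * u = (J-(k:ℝ)) * v := by
    have := choose_cast_two (j+1) k
    push_cast at this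
    rw [hK, hu, hv, hJ]
    push_cast
    linarith
  have hKne : K ≠ 0 := by positivity
  apply mul_left_cancel₀ hKne
  linear_combination (K*((j:ℝ)+2)*a) * h1 + (K*a) * h2 + (-(K*b)) * h3
    + ((((j:ℝ)+2)*v - K*u)) * h4 + ((-(K*b) - ((p:ℝ)-k)*b)) * h5



lemma gKpq_rec (p q : ℕ) :
    ((q:ℝ)+2) • gKpq p (q+2) =
      (C (2*(q:ℝ)+3) + C (4*((p:ℝ)-(q:ℝ)-1)) * X) * gKpq p (q+1)
      + ((q:ℝ)+1) • ((C 4 * X - 1) * gKpq p q) := by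
  ext n
  have expand : ∀ (a b : ℝ) (f : Polynomial ℝ),
      (C a + C b * X) * f = C a * f + C b * (X * f) := by intro a b f; ring
  rw [coeff_smul, coeff_add, expand, coeff_add, coeff_C_mul, coeff_C_mul, coeff_smul]
  have expand2 : (C (4:ℝ) * X - 1) * gKpq p q = C 4 * (X * gKpq p q) - gKpq p q := by ring
  rw [expand2, coeff_sub, coeff_C_mul]
  rcases n with _ | k
  · rw [coeff_X_mul_zero, coeff_X_mul_zero]
    simp only [coeff_gKpq]
    push_cast
    ring_nf
    simp [Nat.choose_zero_right]
    ring
  · rw [coeff_X_mul, coeff_X_mul]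
    simp only [coeff_gKpq, smul_eq_mul]
    have key := choose_id p q k
    push_cast
    linear_combination (4:ℝ)^(k+1) * key



/-- `l` lists the roots of `f` in strictly decreasing order; all real-rooted, all neg. -/
lemma rep_eval (f : Polynomial ℝ) (l : List ℝ) (h : RootsRep f l) (x : ℝ) :
    f.eval x = f.leadingCoeff * (l.map (fun r => x - r)).prod := by
  obtain ⟨hr, _, hlen, _⟩ := h
  have hsplit : f.Splits := by
    rw [Polynomial.splits_iff_card_roots, hr]
    simpa using hlen
  have hf := hsplit.eq_prod_roots
  conv_lhs => rw [hf]
  rw [hr]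
  rw [show (Multiset.map (fun a => X - C a) (↑l : Multiset ℝ)) = ↑(l.map (fun a => X - C a)) from rfl]
  rw [Multiset.prod_coe]
  rw [eval_mul, eval_C, eval_list_prod, List.map_map]
  congr 1
  congr 1
  simp [Function.comp]

lemma sign_prod (l : List ℝ) (x : ℝ) :
    ∀ (i : ℕ), i ≤ l.length →
    (∀ j (hj : j < l.length), j < i → x < l.get ⟨j, hj⟩) →
    (∀ j (hj : j < l.length), i ≤ j → l.get ⟨j, hj⟩ < x) →
    0 < (-1 : ℝ)^i * (l.map (fun r => x - r)).prod := by
  induction l with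
  | nil =>
    intro i hi _ _
    have : i = 0 := by simpa using hi
    subst this
    simp
  | cons r t ih =>
    intro i hi h1 h2
    rcases i with _ | k
    · have hpos : 0 < (t.map (fun r => x - r)).prod := by
        have := ih 0 (by omega) (by omega)
          (fun j hj _ => by
            have := h2 (j+1) (by simpa using Nat.succ_lt_succ hj) (by omega)
            simpa using this)
        simpa using this
      have hr : r < x := by simpa using h2 0 (by simp) (by omega)
      simp only [List.map_cons, List.prod_cons, pow_zero, one_mul]
      have hxr : 0 < x - r := by linarith
      exact mul_pos hxr hpos
    · have hrx : x < r := by simpa using h1 0 (by simp) (by omega)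
      have ht : 0 < (-1 : ℝ)^k * (t.map (fun r => x - r)).prod := by
        apply ih k (by simpa using Nat.lt_succ_iff.mp (Nat.lt_succ_of_le hi))
        · intro j hj hjk
          have := h1 (j+1) (by simpa using Nat.succ_lt_succ hj) (by omega)
          simpa using this
        · intro j hj hkj
          have := h2 (j+1) (by simpa using Nat.succ_lt_succ hj) (by omega)
          simpa using this
      simp only [List.map_cons, List.prod_cons]
      have : (-1:ℝ)^(k+1) * ((x - r) * (t.map (fun r => x - r)).prod)
          = (r - x) * ((-1:ℝ)^k * (t.map (fun r => x - r)).prod) := by ring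
      rw [this]
      have : 0 < r - x := by linarith
      positivity

lemma exists_root_Ioo (f : Polynomial ℝ) {u w : ℝ} (huw : u < w)
    (h : f.eval u * f.eval w < 0) : ∃ r, r ∈ Set.Ioo u w ∧ f.eval r = 0 := by
  have hc : ContinuousOn (fun x => f.eval x) (Set.Icc u w) :=
    (Polynomial.continuous f).continuousOn
  rcases lt_or_ge (f.eval u) 0 with hu | hu
  · have hw : 0 < f.eval w := by nlinarith
    have := intermediate_value_Ioo huw.le hc (Set.mem_Ioo.mpr ⟨hu, hw⟩)
    obtain ⟨r, hr, hr0⟩ := this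
    exact ⟨r, hr, hr0⟩
  · have hu' : 0 < f.eval u := by
      rcases hu.lt_or_eq with h' | h'
      · exact h'
      · exfalso; rw [← h'] at h; simp at h
    have hw : f.eval w < 0 := by nlinarith
    have := intermediate_value_Ioo' huw.le hc (Set.mem_Ioo.mpr ⟨hw, hu'⟩)
    obtain ⟨r, hr, hr0⟩ := this
    exact ⟨r, hr, hr0⟩

lemma exists_low (f : Polynomial ℝ) (hf : 0 < f.leadingCoeff) (y : ℝ) :
    ∃ M, M < y ∧ 0 < (-1 : ℝ)^f.natDegree * f.eval M := by
  rcases Nat.eq_zero_or_pos f.natDegree with h0 | hpos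
  · refine ⟨y - 1, by linarith, ?_⟩
    have hfc : f = C (f.coeff 0) := Polynomial.eq_C_of_natDegree_eq_zero h0
    rw [h0, pow_zero, one_mul]
    rw [hfc]
    simp only [eval_C]
    rw [hfc] at hf
    simpa using hf
  · set n := f.natDegree with hn
    set g : Polynomial ℝ := C ((-1:ℝ)^n) * (f.comp (-X)) with hg
    have hXne : (-X : Polynomial ℝ).natDegree = 1 := by simp
    have hgn : g.natDegree = n := by
      rw [hg, natDegree_C_mul (by positivity), natDegree_comp, hXne, mul_one]
    have hglead : g.leadingCoeff = f.leadingCoeff := by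
      rw [hg, leadingCoeff_mul, leadingCoeff_C,
        Polynomial.leadingCoeff_comp (by rw [hXne]; omega)]
      have hlx : (-X : Polynomial ℝ).leadingCoeff = -1 := by
        rw [leadingCoeff_neg, leadingCoeff_X]
      rw [hlx, ← hn]
      have h2 : ((-1:ℝ)^n) * ((-1:ℝ)^n) = 1 := by
        rw [← pow_add]
        exact (Even.neg_one_pow ⟨n, rfl⟩)
      linear_combination f.leadingCoeff * h2
    have hdeg : 0 < g.degree :=
      Polynomial.natDegree_pos_iff_degree_pos.mp (by rw [hgn]; exact hpos)
    have ht := Polynomial.tendsto_atTop_of_leadingCoeff_nonneg g hdeg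
      (le_of_lt (hglead ▸ hf))
    have h1 : ∀ᶠ x in Filter.atTop, (1:ℝ) ≤ Polynomial.eval x g :=
      ht.eventually_ge_atTop 1
    obtain ⟨x, hx1, hx2⟩ := (h1.and (Filter.eventually_gt_atTop (-y))).exists
    refine ⟨-x, by linarith, ?_⟩
    have hxg : Polynomial.eval x g = (-1:ℝ)^n * f.eval (-x) := by
      rw [hg]; simp [eval_comp]
    linarith [hxg ▸ hx1]



lemma roots_of_alternating (f : Polynomial ℝ) (hf : f ≠ 0) (v : List ℝ)
    (hv : v.Chain' (· > ·)) (hlen : v.length = f.natDegree + 1)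
    (hsign : ∀ j (hj : j < v.length), 0 < (-1:ℝ)^j * f.eval (v.get ⟨j, hj⟩)) :
    ∃ a : List ℝ, a.Chain' (· > ·) ∧ a.length = f.natDegree ∧ f.roots = ↑a ∧
      ∀ j (hj : j < a.length) (hj1 : j < v.length) (hj2 : j + 1 < v.length),
        a.get ⟨j, hj⟩ < v.get ⟨j, hj1⟩ ∧ v.get ⟨j+1, hj2⟩ < a.get ⟨j, hj⟩ := by
  set n := f.natDegree with hn
  have hvmono : ∀ (i j : ℕ) (hi : i < v.length) (hj : j < v.length), i < j →
      v.get ⟨j, hj⟩ < v.get ⟨i, hi⟩ := by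
    intro i j hi hj hij
    have := (List.isChain_iff_pairwise.mp hv)
    exact List.pairwise_iff_get.mp this ⟨i, hi⟩ ⟨j, hj⟩ hij
  have hroot : ∀ i : Fin n, ∃ r,
      r ∈ Set.Ioo (v.get ⟨i+1, by omega⟩) (v.get ⟨(i:ℕ), by omega⟩) ∧ f.eval r = 0 := by
    intro i
    have hi1 : (i:ℕ) + 1 < v.length := by omega
    have hi0 : (i:ℕ) < v.length := by omega
    apply exists_root_Ioo f (hvmono i (i+1) hi0 hi1 (by omega))
    have h1 := hsign i hi0
    have h2 := hsign (i+1) hi1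
    have hp : ((-1:ℝ)^(i:ℕ)) * ((-1:ℝ)^((i:ℕ)+1)) = -1 := by
      rw [← pow_add]
      exact Odd.neg_one_pow ⟨i, by ring⟩
    nlinarith [h1, h2, hp]
  choose t ht0 ht1 using hroot
  refine ⟨List.ofFn t, ?_, by simp, ?_, ?_⟩
  · rw [List.Chain', List.isChain_iff_getElem]
    intro i hi
    simp only [List.length_ofFn] at hi
    simp only [List.getElem_ofFn]
    have hlt : t ⟨i+1, by omega⟩ < v.get ⟨i+1, by omega⟩ := (ht0 ⟨i+1, by omega⟩).2
    have hgt : v.get ⟨i+1, by omega⟩ < t ⟨i, by omega⟩ := (ht0 ⟨i, by omega⟩).1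
    exact lt_trans hlt hgt
  · have hnodup : (List.ofFn t).Nodup := by
      have hchain : (List.ofFn t).Chain' (· > ·) := by
        rw [List.Chain', List.isChain_iff_getElem]
        intro i hi
        simp only [List.length_ofFn] at hi
        simp only [List.getElem_ofFn]
        have hlt : t ⟨i+1, by omega⟩ < v.get ⟨i+1, by omega⟩ := (ht0 ⟨i+1, by omega⟩).2
        have hgt : v.get ⟨i+1, by omega⟩ < t ⟨i, by omega⟩ := (ht0 ⟨i, by omega⟩).1
        exact lt_trans hlt hgt
      exact List.Pairwise.imp (fun h => ne_of_gt h) (List.isChain_iff_pairwise.mp hchain)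
    have hsub : (↑(List.ofFn t) : Multiset ℝ) ≤ f.roots := by
      rw [Multiset.le_iff_subset (Multiset.coe_nodup.mpr hnodup)]
      intro x hx
      rw [Multiset.mem_coe, List.mem_ofFn] at hx
      obtain ⟨i, rfl⟩ := hx
      rw [Polynomial.mem_roots hf]
      exact ht1 i
    have hcard : Multiset.card f.roots ≤ Multiset.card (↑(List.ofFn t) : Multiset ℝ) := by
      rw [Multiset.coe_card, List.length_ofFn]
      exact f.card_roots'
    exact (Multiset.eq_of_le_of_card_le hsub hcard).symm
  · intro j hj hj1 hj2
    simp only [List.length_ofFn] at hj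
    simp only [List.get_ofFn, Fin.cast]
    exact ⟨(ht0 ⟨j, hj⟩).2, (ht0 ⟨j, hj⟩).1⟩



lemma chain'_get_lt {l : List ℝ} (h : l.Chain' (· > ·)) {i j : ℕ}
    (hi : i < l.length) (hj : j < l.length) (hij : i < j) :
    l.get ⟨j, hj⟩ < l.get ⟨i, hi⟩ :=
  List.pairwise_iff_get.mp (List.isChain_iff_pairwise.mp h) ⟨i, hi⟩ ⟨j, hj⟩ hij

lemma chain'_get_le {l : List ℝ} (h : l.Chain' (· > ·)) {i j : ℕ}
    (hi : i < l.length) (hj : j < l.length) (hij : i ≤ j) :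
    l.get ⟨j, hj⟩ ≤ l.get ⟨i, hi⟩ := by
  rcases Nat.lt_or_ge i j with h' | h'
  · exact le_of_lt (chain'_get_lt h hi hj h')
  · have : i = j := by omega
    subst this
    rfl

lemma get_cons_append (a : List ℝ) (M : ℝ) (j : ℕ) (hj : j < a.length + 1)
    (h' : j < ((0 :: a) ++ [M]).length) :
    ((0 :: a) ++ [M]).get ⟨j, h'⟩ = (0 :: a).get ⟨j, by simpa using hj⟩ := by
  rcases j with _ | i
  · rfl
  · have hi : i < a.length := by omega
    simp only [List.get_eq_getElem, List.cons_append, List.getElem_cons_succ]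
    exact List.getElem_append_left hi

lemma step (p q : ℕ) (b a : List ℝ)
    (hb : RootsRep (gKpq p q) b) (ha : RootsRep (gKpq p (q+1)) a) (hab : Interlace a b) :
    ∃ c, RootsRep (gKpq p (q+2)) c ∧ Interlace c a := by
  obtain ⟨hbroots, hbchain, hblen, hbneg⟩ := hb
  obtain ⟨haroots, hachain, halen, haneg⟩ := ha
  have hblen' : b.length = min p q := by rw [hblen, natDegree_gKpq]
  have halen' : a.length = min p (q+1) := by rw [halen, natDegree_gKpq]
  have hn2 : (gKpq p (q+2)).natDegree = min p (q+2) := natDegree_gKpq p (q+2)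
  -- key sign fact at the roots of gKpq p (q+1)
  have key : ∀ (i : ℕ) (hi : i < a.length),
      0 < (-1:ℝ)^(i+1) * (gKpq p (q+2)).eval (a.get ⟨i, hi⟩) := by
    intro i hi
    set x := a.get ⟨i, hi⟩ with hx
    have hxneg : x < 0 := haneg _ (List.get_mem a ⟨i, hi⟩)
    have hGq : 0 < (-1:ℝ)^i * (gKpq p q).eval x := by
      rw [rep_eval (gKpq p q) b ⟨hbroots, hbchain, hblen, hbneg⟩ x]
      have hsp := sign_prod b x i (by omega)
        (fun j hj hji => by
          -- x = a_i < b_j for j < i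
          have h1 : a.get ⟨i, hi⟩ ≤ a.get ⟨j+1, by omega⟩ :=
            chain'_get_le hachain (by omega) hi (by omega)
          have h2 : a.get ⟨j+1, by omega⟩ < b.get ⟨j, hj⟩ := hab.2 j (by omega) hj
          rw [hx]; linarith)
        (fun j hj hij => by
          -- b_j ≤ b_i < a_i = x
          have h1 : b.get ⟨j, hj⟩ ≤ b.get ⟨i, by omega⟩ :=
            chain'_get_le hbchain (by omega) hj hij
          have h2 : b.get ⟨i, by omega⟩ < a.get ⟨i, hi⟩ := hab.1 i (by omega) hi
          rw [hx]; linarith)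
      have hl := leadingCoeff_gKpq_pos p q
      set P := (List.map (fun r => x - r) b).prod
      have : (-1:ℝ)^i * ((gKpq p q).leadingCoeff * P)
          = (gKpq p q).leadingCoeff * ((-1:ℝ)^i * P) := by ring
      rw [this]
      exact mul_pos hl hsp
    have hGq1 : (gKpq p (q+1)).eval x = 0 := by
      have hxr : x ∈ (gKpq p (q+1)).roots := by
        rw [haroots]
        exact Multiset.mem_coe.mpr (List.get_mem a ⟨i, hi⟩)
      exact (Polynomial.mem_roots (gKpq_ne_zero p (q+1))).mp hxr
    have hrec := congrArg (fun f => Polynomial.eval x f) (gKpq_rec p q)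
    simp only [eval_smul, smul_eq_mul, eval_add, eval_mul, eval_sub, eval_C, eval_X,
      eval_one, hGq1, mul_zero, zero_add] at hrec
    have hq2 : (0:ℝ) < (q:ℝ) + 2 := by positivity
    have hmain : ((q:ℝ)+2) * ((-1:ℝ)^(i+1) * (gKpq p (q+2)).eval x)
        = ((q:ℝ)+1) * (1 - 4*x) * ((-1:ℝ)^i * (gKpq p q).eval x) := by
      linear_combination ((-1:ℝ)^(i+1)) * hrec
    have hq1 : (0:ℝ) < (q:ℝ) + 1 := by positivity
    have h14 : (0:ℝ) < 1 - 4*x := by linarith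
    have hrhs : 0 < ((q:ℝ)+1) * (1 - 4*x) * ((-1:ℝ)^i * (gKpq p q).eval x) :=
      mul_pos (mul_pos hq1 h14) hGq
    have hprod : 0 < ((q:ℝ)+2) * ((-1:ℝ)^(i+1) * (gKpq p (q+2)).eval x) := by
      rw [hmain]; exact hrhs
    exact (mul_pos_iff_of_pos_left hq2).mp hprod
  -- now build the node list
  have hane : ∀ j (hj : j < a.length), a.get ⟨j, hj⟩ < 0 :=
    fun j hj => haneg _ (List.get_mem a ⟨j, hj⟩)
  have hcons_chain : (0 :: a).Chain' (· > ·) := by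
    rw [List.Chain', List.isChain_cons]
    constructor
    · intro y hy
      have : y ∈ a := by
        rcases a with _ | ⟨z, t⟩
        · simp at hy
        · simp at hy; simp [hy]
      exact haneg y this
    · exact hachain
  have hsign_cons : ∀ j (hj : j < (0 :: a).length),
      0 < (-1:ℝ)^j * (gKpq p (q+2)).eval ((0 :: a).get ⟨j, hj⟩) := by
    intro j hj
    rcases j with _ | i
    · simp only [List.get, pow_zero, one_mul]
      rw [eval_zero_gKpq]
      norm_num
    · have hi : i < a.length := by simpa using hj
      have := key i hi
      simpa using this
  have hstep : ∃ v : List ℝ, v.Chain' (· > ·)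
      ∧ v.length = (gKpq p (q+2)).natDegree + 1
      ∧ (∀ j (hj : j < v.length), 0 < (-1:ℝ)^j * (gKpq p (q+2)).eval (v.get ⟨j, hj⟩))
      ∧ (∀ j (hj : j < a.length + 1) (hj' : j < v.length),
          v.get ⟨j, hj'⟩ = (0 :: a).get ⟨j, hj⟩)
      ∧ a.length + 1 ≤ v.length := by
    rcases Nat.lt_or_ge (a.length) (min p (q+2)) with hcase | hcase
    · -- extra node M at the bottom
      have hd : min p (q+2) = a.length + 1 := by omega
      obtain ⟨M, hM1, hM2⟩ := exists_low (gKpq p (q+2)) (leadingCoeff_gKpq_pos p (q+2))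
        ((0 :: a).getLast (by simp))
      refine ⟨(0 :: a) ++ [M], ?_, ?_, ?_, ?_, ?_⟩
      · rw [List.Chain', List.isChain_append]
        refine ⟨hcons_chain, List.isChain_singleton M, ?_⟩
        intro x hx y hy
        simp at hy
        subst hy
        rw [List.getLast?_eq_getLast (by simp)] at hx
        simp at hx
        rw [← hx]
        exact hM1
      · simp [hn2, hd]
      · intro j hj
        have hjlen : j < a.length + 2 := by simp at hj; omega
        rcases Nat.lt_or_ge j (a.length + 1) with hj1 | hj1
        · rw [get_cons_append a M j hj1 hj]
          exact hsign_cons j (by simpa using hj1)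
        · have hje : j = a.length + 1 := by omega
          subst hje
          have hget : ((0 :: a) ++ [M]).get ⟨a.length + 1, hj⟩ = M := by
            simp [List.get_eq_getElem]
          rw [hget]
          have hnd : (gKpq p (q+2)).natDegree = a.length + 1 := by rw [hn2, hd]
          rw [← hnd]
          exact hM2
      · intro j hj hj'
        exact get_cons_append a M j hj hj'
      · simp
    · -- no extra node
      have hd : min p (q+2) = a.length := by
        have h1 : min p (q+1) ≤ min p (q+2) := by omega
        omega
      refine ⟨0 :: a, hcons_chain, by simp [hn2, hd], hsign_cons, ?_, by simp⟩
      intro j hj hj'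
      rfl
  obtain ⟨v, hvchain, hvlen2, hvsign, hgetv, hvge⟩ := hstep
  obtain ⟨c, hcchain, hclen, hcroots, hcbound⟩ :=
    roots_of_alternating (gKpq p (q+2)) (gKpq_ne_zero p (q+2)) v hvchain hvlen2 hvsign
  have hclen' : c.length = (gKpq p (q+2)).natDegree := hclen
  have hcneg : ∀ x ∈ c, x < 0 := by
    intro x hx
    obtain ⟨⟨j, hj⟩, rfl⟩ := List.mem_iff_get.mp hx
    have hjv : j < v.length := by omega
    have hjv2 : j + 1 < v.length := by omega
    have hb := (hcbound j hj hjv hjv2).1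
    have hvle : v.get ⟨j, hjv⟩ ≤ 0 := by
      have hja : j < a.length + 1 := by
        have : c.length ≤ a.length + 1 := by
          rw [hclen', hn2]
          rw [halen'] at *
          omega
        omega
      rw [hgetv j hja hjv]
      rcases j with _ | i
      · simp [List.get]
      · have hi : i < a.length := by omega
        have : (0 :: a).get ⟨i+1, by simpa using hja⟩ = a.get ⟨i, hi⟩ := rfl
        rw [this]
        exact le_of_lt (hane i hi)
    linarith
  refine ⟨c, ⟨hcroots, hcchain, hclen', hcneg⟩, ?_, ?_⟩
  · -- a_i < c_i for i < min lengths
    intro i h1 h2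
    have hjv : i < v.length := by omega
    have hjv2 : i + 1 < v.length := by omega
    have hb := (hcbound i h2 hjv hjv2).2
    have hja : i + 1 < a.length + 1 := by omega
    rw [hgetv (i+1) hja hjv2] at hb
    have : (0 :: a).get ⟨i+1, by simpa using hja⟩ = a.get ⟨i, h1⟩ := rfl
    rw [this] at hb
    exact hb
  · -- c_{i+1} < a_i
    intro i h1 h2
    have hjv : i + 1 < v.length := by omega
    have hjv2 : i + 2 < v.length := by omega
    have hb := (hcbound (i+1) h1 hjv hjv2).1
    have hja : i + 1 < a.length + 1 := by omega
    rw [hgetv (i+1) hja hjv] at hb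
    have : (0 :: a).get ⟨i+1, by simpa using hja⟩ = a.get ⟨i, h2⟩ := rfl
    rw [this] at hb
    exact hb



lemma gKpq_zero (p : ℕ) : gKpq p 0 = C 1 := by
  unfold gKpq
  simp

lemma gKpq_one (p : ℕ) (hp : 0 < p) :
    gKpq p 1 = C ((4:ℝ) * p) * (X - C (-(1/(4 * (p:ℝ))))) := by
  have hp' : (0:ℝ) < p := by exact_mod_cast hp
  have hmin : min p 1 = 1 := by omega
  unfold gKpq
  rw [hmin]
  rw [Finset.sum_range_succ, Finset.sum_range_one]
  simp only [pow_zero, Nat.choose_zero_right, Nat.cast_one, pow_one, Nat.choose_one_right,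
    Nat.choose_self]
  rw [mul_sub]
  rw [← C_mul]
  have h1 : (4:ℝ) * p * -(1/(4 * (p:ℝ))) = -1 := by
    field_simp
  rw [h1]
  ring_nf
  rw [C_1, C_neg, C_1]
  ring

lemma base (p : ℕ) (hp : 0 < p) :
    RootsRep (gKpq p 0) [] ∧ RootsRep (gKpq p 1) [-(1/(4 * (p:ℝ)))] ∧
      Interlace [-(1/(4 * (p:ℝ)))] [] := by
  have hp' : (0:ℝ) < p := by exact_mod_cast hp
  refine ⟨⟨?_, by simp [List.Chain'], ?_, by simp⟩, ⟨?_, by simp [List.Chain'], ?_, ?_⟩, ?_, ?_⟩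
  · rw [gKpq_zero]; simp
  · rw [natDegree_gKpq]; simp
  · rw [gKpq_one p hp, Polynomial.roots_C_mul _ (by positivity), Polynomial.roots_X_sub_C]
    rfl
  · rw [natDegree_gKpq]; simp; omega
  · intro x hx
    simp at hx
    rw [hx]
    have h0 : 0 < ((p:ℝ))⁻¹ * 4⁻¹ := by positivity
    linarith
  · intro i h1 h2
    simp at h1
  · intro i h1 h2
    simp at h2

lemma main (p : ℕ) (hp : 0 < p) (q : ℕ) :
    ∃ b a, RootsRep (gKpq p q) b ∧ RootsRep (gKpq p (q+1)) a ∧ Interlace a b := by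
  induction q with
  | zero =>
    obtain ⟨h0, h1, h01⟩ := base p hp
    exact ⟨[], [-(1/(4 * (p:ℝ)))], h0, h1, h01⟩
  | succ k ih =>
    obtain ⟨b, a, hb, ha, hab⟩ := ih
    obtain ⟨c, hc, hca⟩ := step p k b a hb ha hab
    exact ⟨a, c, ha, hc, hca⟩



lemma sort_rep (f : Polynomial ℝ) (l : List ℝ) (h : RootsRep f l) :
    f.roots.sort (· ≥ ·) = l := by
  obtain ⟨hr, hchain, _, _⟩ := h
  rw [hr]
  have hperm : (Multiset.sort (α := ℝ) ↑l (· ≥ ·)).Perm l :=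
    Multiset.coe_eq_coe.mp (Multiset.sort_eq _ _)
  refine List.Perm.eq_of_pairwise' (Multiset.pairwise_sort _ _) ?_ hperm
  exact List.Pairwise.imp le_of_lt (List.isChain_iff_pairwise.mp hchain)

/-- `g_{p,q}` and `g_{p,q+1}` are real-rooted and `g_{p,q}` interlaces `g_{p,q+1}`:
listing the roots in weakly decreasing order as `a₁ ≥ a₂ ≥ ⋯` (for `g_{p,q+1}`) and
`b₁ ≥ b₂ ≥ ⋯` (for `g_{p,q}`), one has `a₁ ≥ b₁ ≥ a₂ ≥ b₂ ≥ ⋯`. -/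
theorem stmt13 (p q : ℕ) (hp : 0 < p) (hq : 0 < q) :
    (Multiset.card (gKpq p q).roots = (gKpq p q).natDegree) ∧
    (Multiset.card (gKpq p (q + 1)).roots = (gKpq p (q + 1)).natDegree) ∧
    (∀ i (hB : i < ((gKpq p q).roots.sort (· ≥ ·)).length)
        (hA : i < ((gKpq p (q + 1)).roots.sort (· ≥ ·)).length),
        ((gKpq p q).roots.sort (· ≥ ·)).get ⟨i, hB⟩ ≤
          ((gKpq p (q + 1)).roots.sort (· ≥ ·)).get ⟨i, hA⟩) ∧
    (∀ i (hA : i + 1 < ((gKpq p (q + 1)).roots.sort (· ≥ ·)).length)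
        (hB : i < ((gKpq p q).roots.sort (· ≥ ·)).length),
        ((gKpq p (q + 1)).roots.sort (· ≥ ·)).get ⟨i + 1, hA⟩ ≤
          ((gKpq p q).roots.sort (· ≥ ·)).get ⟨i, hB⟩) := by
  obtain ⟨b, a, hb, ha, hab⟩ := main p hp q
  have hsb : (gKpq p q).roots.sort (· ≥ ·) = b := sort_rep _ _ hb
  have hsa : (gKpq p (q+1)).roots.sort (· ≥ ·) = a := sort_rep _ _ ha
  refine ⟨?_, ?_, ?_, ?_⟩
  · rw [hb.1, Multiset.coe_card, hb.2.2.1]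
  · rw [ha.1, Multiset.coe_card, ha.2.2.1]
  · intro i hB hA
    have hBb : i < b.length := by rw [← hsb]; exact hB
    have hAa : i < a.length := by rw [← hsa]; exact hA
    have e1 : ((gKpq p q).roots.sort (· ≥ ·)).get ⟨i, hB⟩ = b.get ⟨i, hBb⟩ := by
      rw [List.get_of_eq hsb ⟨i, hB⟩]
    have e2 : ((gKpq p (q+1)).roots.sort (· ≥ ·)).get ⟨i, hA⟩ = a.get ⟨i, hAa⟩ := by
      rw [List.get_of_eq hsa ⟨i, hA⟩]
    rw [e1, e2]
    exact le_of_lt (hab.1 i hBb hAa)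
  · intro i hA hB
    have hBb : i < b.length := by rw [← hsb]; exact hB
    have hAa : i + 1 < a.length := by rw [← hsa]; exact hA
    have e1 : ((gKpq p q).roots.sort (· ≥ ·)).get ⟨i, hB⟩ = b.get ⟨i, hBb⟩ := by
      rw [List.get_of_eq hsb ⟨i, hB⟩]
    have e2 : ((gKpq p (q+1)).roots.sort (· ≥ ·)).get ⟨i+1, hA⟩ = a.get ⟨i+1, hAa⟩ := by
      rw [List.get_of_eq hsa ⟨i+1, hA⟩]
    rw [e1, e2]
    exact le_of_lt (hab.2 i hAa hBb)
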